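/- For the CIR-type Laplace transform: if γ = √(κ² + 2Σ²Λ) with κ, Σ > 0 and Λ ≥ −κ²/(2Σ²), then the functions U(t) = (−2/Σ²) log[2γ e^{(γ+κ)t/2} / ((γ−κ) + e^{γt}(γ+κ))] and V(t) = 2Λ(e^{γt} − 1)/((γ−κ) + e^{γt}(γ+κ)) satisfy the Riccati system V'(t) = Λ − κV(t) − (Σ²/2)V(t)², U'(t) = V(t), with U(0) = V(0) = 0. -/

import Mathlib

open Real

/-- CIR-type Laplace transform: with `γ = √(κ² + 2Σ²Λ)` (`κ, Σ > 0`, `Λ > −κ²/(2Σ²)`), the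
closed-form functions `U, V` satisfy the Riccati system
`V' = Λ − κV − (Σ²/2)V²`, `U' = V`, with `U(0) = V(0) = 0`.  (`S` denotes `Σ`.) -/
theorem stmt14 (κ S Λ : ℝ) (hκ : 0 < κ) (hS : 0 < S) (hΛ : Λ > -κ ^ 2 / (2 * S ^ 2))
    (γ : ℝ) (hγ : γ = Real.sqrt (κ ^ 2 + 2 * S ^ 2 * Λ))
    (U V : ℝ → ℝ)
    (hU : U = fun t => (-2 / S ^ 2) * Real.log
      (2 * γ * Real.exp ((γ + κ) * t / 2) / ((γ - κ) + Real.exp (γ * t) * (γ + κ))))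
    (hV : V = fun t => 2 * Λ * (Real.exp (γ * t) - 1) /
      ((γ - κ) + Real.exp (γ * t) * (γ + κ))) :
    U 0 = 0 ∧ V 0 = 0 ∧
      ∀ t : ℝ, 0 ≤ t →
        HasDerivAt V (Λ - κ * V t - S ^ 2 / 2 * (V t) ^ 2) t ∧ HasDerivAt U (V t) t := by
  have hpos : 0 < κ ^ 2 + 2 * S ^ 2 * Λ := by
    have h2S : 0 < 2 * S ^ 2 := by positivity
    rw [gt_iff_lt, div_lt_iff₀ h2S] at hΛ
    nlinarith
  have hγpos : 0 < γ := hγ ▸ Real.sqrt_pos.mpr hpos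
  have hγ2 : γ ^ 2 = κ ^ 2 + 2 * S ^ 2 * Λ := by
    rw [hγ, sq_sqrt hpos.le]
  have hΛeq : Λ = (γ ^ 2 - κ ^ 2) / (2 * S ^ 2) := by
    field_simp
    linarith
  have hSne : S ≠ 0 := hS.ne'
  have hD : ∀ t : ℝ, 0 ≤ t → 0 < (γ - κ) + Real.exp (γ * t) * (γ + κ) := by
    intro t ht
    have h1 : (1:ℝ) ≤ Real.exp (γ * t) := Real.one_le_exp (by positivity)
    nlinarith
  refine ⟨?_, ?_, ?_⟩
  · rw [hU]
    simp only [mul_zero, zero_div, Real.exp_zero, mul_one]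
    rw [show γ - κ + 1 * (γ + κ) = 2 * γ by ring, div_self (by positivity), Real.log_one,
      mul_zero]
  · rw [hV]
    simp
  · intro t ht
    have hDpos := hD t ht
    have hDne : (γ - κ) + Real.exp (γ * t) * (γ + κ) ≠ 0 := hDpos.ne'
    set E := Real.exp (γ * t) with hE
    have hEpos : 0 < E := Real.exp_pos _
    have hEder : HasDerivAt (fun t => Real.exp (γ * t)) (E * γ) t := by
      simpa using ((hasDerivAt_id t).const_mul γ).exp
    have hDder : HasDerivAt (fun t => (γ - κ) + Real.exp (γ * t) * (γ + κ))
        (E * γ * (γ + κ)) t := (hEder.mul_const _).const_add _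
    constructor
    · have hNder : HasDerivAt (fun t => 2 * Λ * (Real.exp (γ * t) - 1))
        (2 * Λ * (E * γ)) t := (hEder.sub_const 1).const_mul _
      have hVder := hNder.div hDder hDne
      rw [hV]
      convert hVder using 1
      · rfl
      · rfl
      · rfl
      rw [hΛeq]
      simp only [← hE]
      field_simp
      ring
    · have hexne : Real.exp ((γ + κ) * t / 2) ≠ 0 := (Real.exp_pos _).ne'
      have hExder : HasDerivAt (fun t => Real.exp ((γ + κ) * t / 2))
          (Real.exp ((γ + κ) * t / 2) * ((γ + κ) / 2)) t := by
        simpa using (((hasDerivAt_id t).const_mul (γ + κ)).div_const 2).exp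
      have hfder := (hExder.const_mul (2 * γ)).div hDder hDne
      have hfne : 2 * γ * Real.exp ((γ + κ) * t / 2) /
          ((γ - κ) + Real.exp (γ * t) * (γ + κ)) ≠ 0 := by
        positivity
      have hUder := (hfder.log hfne).const_mul (-2 / S ^ 2)
      rw [hU, hV]
      convert hUder using 1
      · rfl
      · rfl
      · rfl
      rw [hΛeq]
      simp only [← hE, Pi.div_apply]
      rw [div_div_div_eq]
      field_simp
      ring
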